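/- Assume all parameters are positive and δ > δ₀, where δ₀ = (s_M/μ_M)[η − β((N₂−N₃)γ + (N₁−N₃)b)/(b+γ)]. Then the Jacobian matrix J of the in-host TB system at the infection-free steady state has a real eigenvalue λ₁ = −c₁/2 + (1/2)√(c₁² − 4c₂) > 0, where c₁ = (b+γ) + (s_M/μ_M)(N₃ β + η) − δ and c₂ = (b+γ)(δ₀ − δ) < 0; hence the infection-free steady state is linearly unstable. -/

import Mathlib

open Matrix

set_option maxHeartbeats 1000000

/-- If δ > δ₀ then the Jacobian J at the infection-free steady state
has a positive real eigenvalue λ₁ = −c₁/2 + (1/2)√(c₁²−4c₂), with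
c₂ = (b+γ)(δ₀−δ) < 0; hence the infection-free steady state is linearly unstable. -/
theorem infection_free_unstable_above_threshold
    (sM μM β b γ δ N₁ N₂ N₃ η sT cM eM cB eB μT : ℝ)
    (hsM : 0 < sM) (hμM : 0 < μM) (hβ : 0 < β) (hb : 0 < b) (hγ : 0 < γ)
    (hδ : 0 < δ) (hN₁ : 0 < N₁) (hN₂ : 0 < N₂) (hN₃ : 0 < N₃) (hη : 0 < η)
    (hsT : 0 < sT) (hcM : 0 < cM) (heM : 0 < eM) (hcB : 0 < cB) (heB : 0 < eB)
    (hμT : 0 < μT)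
    (Tbar : ℝ) (hTbar : Tbar = sT / μT)
    (J : Matrix (Fin 4) (Fin 4) ℝ)
    (hJ : J = !![-μM, 0, -β * sM / μM, 0;
                 0, -(b + γ), β * sM / μM, 0;
                 0, N₁ * b + N₂ * γ, δ - (sM / μM) * (η + N₃ * β), 0;
                 0, cM * Tbar / (eM * Tbar + 1), cB * Tbar / (eB * Tbar + 1), -μT])
    (c₁ c₂ δ₀ : ℝ)
    (hc₁ : c₁ = (b + γ) + (sM / μM) * (N₃ * β + η) - δ)
    (hc₂ : c₂ = (b + γ) * (η * sM / μM
      - (β * sM / μM) * ((N₂ - N₃) * γ + (N₁ - N₃) * b) / (b + γ) - δ))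
    (hδ₀ : δ₀ = (sM / μM) * (η - β * ((N₂ - N₃) * γ + (N₁ - N₃) * b) / (b + γ)))
    (hthr : δ₀ < δ)
    (lam₁ : ℝ)
    (hlam₁ : lam₁ = -c₁ / 2 + (1 / 2) * Real.sqrt (c₁ ^ 2 - 4 * c₂)) :
    c₂ = (b + γ) * (δ₀ - δ) ∧ c₂ < 0 ∧ 0 < lam₁ ∧ lam₁ ∈ spectrum ℝ J := by
  have hbγ : 0 < b + γ := by linarith
  have hμM' : μM ≠ 0 := ne_of_gt hμM
  have hbγ' : b + γ ≠ 0 := ne_of_gt hbγ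
  have hc2eq : c₂ = (b + γ) * (δ₀ - δ) := by
    rw [hc₂, hδ₀]; field_simp
  have hc2neg : c₂ < 0 := by
    rw [hc2eq]; exact mul_neg_of_pos_of_neg hbγ (by linarith)
  have hdisc : 0 ≤ c₁ ^ 2 - 4 * c₂ := by nlinarith [sq_nonneg c₁]
  have hs2 : Real.sqrt (c₁ ^ 2 - 4 * c₂) ^ 2 = c₁ ^ 2 - 4 * c₂ := Real.sq_sqrt hdisc
  have hsge : |c₁| < Real.sqrt (c₁ ^ 2 - 4 * c₂) := by
    have h := Real.sqrt_lt_sqrt (sq_nonneg c₁) (by linarith : c₁ ^ 2 < c₁ ^ 2 - 4 * c₂)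
    rwa [Real.sqrt_sq_eq_abs] at h
  have hlampos : 0 < lam₁ := by
    rw [hlam₁]
    have h1 : c₁ ≤ |c₁| := le_abs_self c₁
    nlinarith
  have hquad : lam₁ ^ 2 + c₁ * lam₁ + c₂ = 0 := by
    rw [hlam₁]; linear_combination (1/4 : ℝ) * hs2
  have hc₂' : c₂ = (b + γ) * ((sM / μM) * (η + N₃ * β) - δ)
      - (β * sM / μM) * (N₁ * b + N₂ * γ) := by
    rw [hc₂]; field_simp; ring
  have hq : lam₁ ^ 2 + ((b + γ) + (sM / μM) * (N₃ * β + η) - δ) * lam₁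
      + ((b + γ) * ((sM / μM) * (η + N₃ * β) - δ)
        - (β * sM / μM) * (N₁ * b + N₂ * γ)) = 0 := by
    rw [← hc₁, ← hc₂']; exact hquad
  refine ⟨hc2eq, hc2neg, hlampos, ?_⟩
  rw [spectrum.mem_iff, Matrix.isUnit_iff_isUnit_det, isUnit_iff_ne_zero, ne_eq, not_not]
  subst hJ
  have hM : (algebraMap ℝ (Matrix (Fin 4) (Fin 4) ℝ)) lam₁ -
        !![-μM, 0, -β * sM / μM, 0;
          0, -(b + γ), β * sM / μM, 0;
          0, N₁ * b + N₂ * γ, δ - sM / μM * (η + N₃ * β), 0;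
          0, cM * Tbar / (eM * Tbar + 1), cB * Tbar / (eB * Tbar + 1), -μT] =
      !![lam₁ + μM, 0, β * sM / μM, 0;
         0, lam₁ + (b + γ), -(β * sM / μM), 0;
         0, -(N₁ * b + N₂ * γ), lam₁ - (δ - sM / μM * (η + N₃ * β)), 0;
         0, -(cM * Tbar / (eM * Tbar + 1)), -(cB * Tbar / (eB * Tbar + 1)), lam₁ + μT] := by
    ext i j
    fin_cases i <;> fin_cases j <;> simp [Matrix.algebraMap_matrix_apply]
    all_goals first | exact neg_zero | ring1
  rw [hM]
  norm_num [Matrix.det_succ_row_zero, Fin.sum_univ_succ]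
  simp [Fin.succAbove, Fin.lt_def]
  all_goals try (show -(0:ℝ) = (0:ℝ); exact neg_zero)
  right
  linear_combination (lam₁ + μT) * hq
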